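/- Let p ∈ (2, 3). Then for all z > 0 with z ≠ 1 one has g_p(z) := z^{p−2} + 1 − (z^{p−1} − 1)/(z − 1) > 0. Equivalently, for all σ_1, σ_2 ∈ (0,∞) with σ_1 ≠ σ_2, σ_1^{p−2} + σ_2^{p−2} ≥ (σ_2^{p−1} − σ_1^{p−1})/(σ_2 − σ_1); that is, condition (psi-cond) holds for ψ_p with constant κ = (p−1)/2. -/
import Mathlib


open Real Set

private lemma g_pos (p : ℝ) (hp : p ∈ Set.Ioo (2:ℝ) 3) :
    ∀ z : ℝ, 0 < z → z ≠ 1 →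
        0 < z ^ (p - 2) + 1 - (z ^ (p - 1) - 1) / (z - 1) := by
  obtain ⟨hp2, hp3⟩ := hp
  intro z hz hz1
  have hmul : z ^ (p - 2) * z = z ^ (p - 1) := by
    have h := Real.rpow_add hz (p - 2) 1
    rw [Real.rpow_one, show p - 2 + 1 = p - 1 by ring] at h
    linarith
  rcases lt_or_gt_of_ne hz1 with h | h
  · -- z < 1 : z < z ^ (p-2)
    have hlt : z ^ (1:ℝ) < z ^ (p - 2) :=
      Real.rpow_lt_rpow_of_exponent_gt hz h (by linarith)
    rw [Real.rpow_one] at hlt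
    have hzm : z - 1 < 0 := by linarith
    have key : (z ^ (p - 1) - 1) / (z - 1) < z ^ (p - 2) + 1 := by
      rw [div_lt_iff_of_neg hzm]
      nlinarith [hlt, hmul]
    linarith
  · -- z > 1 : z ^ (p-2) < z
    have hlt : z ^ (p - 2) < z ^ (1:ℝ) :=
      Real.rpow_lt_rpow_of_exponent_lt h (by linarith)
    rw [Real.rpow_one] at hlt
    have hzm : 0 < z - 1 := by linarith
    have key : (z ^ (p - 1) - 1) / (z - 1) < z ^ (p - 2) + 1 := by
      rw [div_lt_iff₀ hzm]
      nlinarith [hlt, hmul]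
    linarith

private lemma half (p : ℝ) (hp : p ∈ Set.Ioo (2:ℝ) 3) (σ₁ σ₂ : ℝ)
    (h1 : 0 < σ₁) (h2 : 0 < σ₂) (hlt : σ₁ < σ₂) :
    (σ₂ ^ (p - 1) - σ₁ ^ (p - 1)) / (σ₂ - σ₁) ≤ σ₁ ^ (p - 2) + σ₂ ^ (p - 2) := by
  set z := σ₂ / σ₁ with hzdef
  have hz : 0 < z := div_pos h2 h1
  have hz1 : 1 < z := (one_lt_div h1).mpr hlt
  have hg := g_pos p hp z hz (by linarith)
  have hquot : (z ^ (p - 1) - 1) / (z - 1) ≤ z ^ (p - 2) + 1 := by linarith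
  have hzm : 0 < z - 1 := by linarith
  have h1' : z ^ (p - 1) - 1 ≤ (z ^ (p - 2) + 1) * (z - 1) :=
    (div_le_iff₀ hzm).mp hquot
  have hσ₂ : σ₂ = σ₁ * z := by rw [hzdef]; field_simp
  have e1 : σ₂ ^ (p - 1) = σ₁ ^ (p - 1) * z ^ (p - 1) := by
    rw [hσ₂, Real.mul_rpow h1.le hz.le]
  have e2 : σ₂ ^ (p - 2) = σ₁ ^ (p - 2) * z ^ (p - 2) := by
    rw [hσ₂, Real.mul_rpow h1.le hz.le]
  have e3 : σ₁ ^ (p - 1) = σ₁ ^ (p - 2) * σ₁ := by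
    have h := Real.rpow_add h1 (p - 2) 1
    rw [Real.rpow_one, show p - 2 + 1 = p - 1 by ring] at h
    linarith
  have hpos1 : 0 < σ₁ ^ (p - 1) := Real.rpow_pos_of_pos h1 _
  have hpos2 : 0 < σ₁ ^ (p - 2) := Real.rpow_pos_of_pos h1 _
  rw [div_le_iff₀ (by linarith : 0 < σ₂ - σ₁)]
  calc σ₂ ^ (p - 1) - σ₁ ^ (p - 1) = σ₁ ^ (p - 1) * (z ^ (p - 1) - 1) := by
        rw [e1]; ring
    _ ≤ σ₁ ^ (p - 1) * ((z ^ (p - 2) + 1) * (z - 1)) :=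
        mul_le_mul_of_nonneg_left h1' hpos1.le
    _ = (σ₁ ^ (p - 2) + σ₂ ^ (p - 2)) * (σ₂ - σ₁) := by
        rw [e2, e3, hσ₂]; ring

theorem stmt_3 (p : ℝ) (hp : p ∈ Set.Ioo (2:ℝ) 3) :
    (∀ z : ℝ, 0 < z → z ≠ 1 →
        0 < z ^ (p - 2) + 1 - (z ^ (p - 1) - 1) / (z - 1)) ∧
      (∀ σ₁ σ₂ : ℝ, 0 < σ₁ → 0 < σ₂ → σ₁ ≠ σ₂ →
        (σ₂ ^ (p - 1) - σ₁ ^ (p - 1)) / (σ₂ - σ₁) ≤ σ₁ ^ (p - 2) + σ₂ ^ (p - 2)) := by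
  refine ⟨g_pos p hp, ?_⟩
  intro σ₁ σ₂ h1 h2 hne
  rcases lt_or_gt_of_ne hne with h | h
  · exact half p hp σ₁ σ₂ h1 h2 h
  · have := half p hp σ₂ σ₁ h2 h1 h
    have hrw : (σ₂ ^ (p - 1) - σ₁ ^ (p - 1)) / (σ₂ - σ₁)
        = (σ₁ ^ (p - 1) - σ₂ ^ (p - 1)) / (σ₁ - σ₂) := by
      rw [← neg_div_neg_eq]; ring_nf
    rw [hrw]
    linarith
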